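/- arXiv:2409.03562 — 5 statements merged into one kernel-verified Lean document; each statement's English description precedes it below -/
import Mathlib

section
/- There exists a sequence of natural numbers s(n) with s(1) > 1, strictly increasing, with s(n+1)/s(n) ≥ 2 for all n, and such that for all n ≠ n', U_{s(n)}(r_{s(n')}) < 1/2^(n+n'), where U_m(r) = (1-r^2)·m·r^(m-1) and r_m = sqrt(1 - 1/m). -/
set_option maxHeartbeats 1000000 in
theorem exists_lacunary_sequence :
    ∃ s : ℕ → ℕ,
      1 < s 1 ∧
      (∀ n, 1 ≤ n → s n < s (n + 1)) ∧
      (∀ n, 1 ≤ n → 2 * s n ≤ s (n + 1)) ∧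
      (∀ n n', 1 ≤ n → 1 ≤ n' → n ≠ n' →
        (1 - Real.sqrt (1 - 1 / (s n' : ℝ)) ^ 2) * (s n : ℝ) *
            Real.sqrt (1 - 1 / (s n' : ℝ)) ^ (s n - 1) <
          1 / 2 ^ (n + n')) := by
  refine ⟨fun n => 2 ^ (2 * n ^ 2), by norm_num, ?_, ?_, ?_⟩
  · intro n hn
    exact Nat.pow_lt_pow_right one_lt_two (by nlinarith)
  · intro n hn
    calc 2 * 2 ^ (2 * n ^ 2) = 2 ^ (2 * n ^ 2 + 1) := by ring
      _ ≤ 2 ^ (2 * (n + 1) ^ 2) := Nat.pow_le_pow_right (by norm_num) (by nlinarith)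
  · intro n n' hn hn' hne
    simp only
    set m : ℕ := 2 ^ (2 * n ^ 2) with hm
    set m' : ℕ := 2 ^ (2 * n' ^ 2) with hm'
    set r : ℝ := Real.sqrt (1 - 1 / (m' : ℝ)) with hrdef
    have hm'4 : (4:ℕ) ≤ m' := by
      calc (4:ℕ) = 2 ^ 2 := rfl
        _ ≤ m' := Nat.pow_le_pow_right (by norm_num) (by nlinarith)
    have hm4 : (4:ℕ) ≤ m := by
      calc (4:ℕ) = 2 ^ 2 := rfl
        _ ≤ m := Nat.pow_le_pow_right (by norm_num) (by nlinarith)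
    have hm'R : (4:ℝ) ≤ (m':ℝ) := by exact_mod_cast hm'4
    have hε0 : (0:ℝ) < 1 / m' := by positivity
    have hε1 : 1 / (m':ℝ) ≤ 1 := by
      rw [div_le_one (by linarith)]; linarith
    have h1ε : (0:ℝ) ≤ 1 - 1 / m' := by linarith
    have hr2 : r ^ 2 = 1 - 1 / (m':ℝ) := Real.sq_sqrt h1ε
    have hr0 : 0 ≤ r := Real.sqrt_nonneg _
    have hr1 : r < 1 := by nlinarith [sq_nonneg (r - 1)]
    have hgoal_eq : 1 - r ^ 2 = 1 / (m':ℝ) := by rw [hr2]; ring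
    rw [hgoal_eq]
    rcases lt_or_gt_of_ne hne with h | h
    · -- n < n'
      have hpow : r ^ (m - 1) < 1 := pow_lt_one₀ hr0 hr1 (by omega)
      have hpos : (0:ℝ) < 1 / (m':ℝ) * m := by positivity
      have h2 : 1 / (m':ℝ) * m * r ^ (m - 1) < 1 / (m':ℝ) * m := by
        nth_rewrite 2 [← mul_one (1 / (m':ℝ) * m)]
        exact mul_lt_mul_of_pos_left hpow hpos
      have hexp : 2 * n ^ 2 + (n + n') ≤ 2 * n' ^ 2 := by
        obtain ⟨d, rfl⟩ : ∃ d, n' = n + 1 + d := ⟨n' - n - 1, by omega⟩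
        nlinarith
      have hnat : m * 2 ^ (n + n') ≤ m' := by
        rw [hm, hm', ← pow_add]
        exact Nat.pow_le_pow_right (by norm_num) hexp
      have h3 : 1 / (m':ℝ) * m ≤ 1 / 2 ^ (n + n') := by
        rw [div_mul_eq_mul_div, div_le_div_iff₀ (by linarith) (by positivity)]
        calc (1:ℝ) * m * 2 ^ (n + n') = ((m * 2 ^ (n + n') : ℕ) : ℝ) := by push_cast; ring
          _ ≤ (m' : ℝ) := by exact_mod_cast hnat
          _ = 1 * (m' : ℝ) := by ring
      linarith
    · -- n > n'
      have hn2 : 2 ≤ n := by omega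
      have h3le : 3 ≤ 2 * n ^ 2 := by nlinarith
      set K : ℕ := 2 ^ (2 * n ^ 2 - 3) with hK
      have hK1 : 1 ≤ K := Nat.one_le_two_pow
      have hKm : K * 8 = m := by
        rw [hK, hm, show (8:ℕ) = 2 ^ 3 from rfl, ← pow_add, Nat.sub_add_cancel h3le]
      have h6K : 6 * K ≤ m - 1 := by omega
      have hstep1 : r ^ (m - 1) ≤ r ^ (6 * K) := pow_le_pow_of_le_one hr0 hr1.le h6K
      have hstep2 : r ^ (6 * K) = ((1 - 1 / (m':ℝ)) ^ K) ^ 3 := by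
        calc r ^ (6 * K) = r ^ (2 * (K * 3)) := by ring_nf
          _ = ((r ^ 2) ^ K) ^ 3 := by rw [pow_mul, pow_mul]
          _ = ((1 - 1 / (m':ℝ)) ^ K) ^ 3 := by rw [hr2]
      have hbern : (1 - 1 / (m':ℝ)) ^ K ≤ (m':ℝ) / (m' + K) := by
        have h1 : (1:ℝ) + K * (1 / m') ≤ (1 + 1 / m') ^ K :=
          one_add_mul_le_pow (by linarith) K
        have hp0 : (0:ℝ) < (1 + 1 / (m':ℝ)) ^ K := by positivity
        have h2 : (1 - 1 / (m':ℝ)) ^ K * (1 + 1 / m') ^ K ≤ 1 := by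
          rw [← mul_pow]
          have he : (1 - 1 / (m':ℝ)) * (1 + 1 / m') = 1 - (1 / m') ^ 2 := by ring
          rw [he]
          exact pow_le_one₀ (by nlinarith [sq_nonneg (1 / (m':ℝ))]) (by nlinarith [sq_nonneg (1 / (m':ℝ))])
        have h3 : (1 - 1 / (m':ℝ)) ^ K ≤ 1 / (1 + 1 / (m':ℝ)) ^ K := by
          rw [le_div_iff₀ hp0]; linarith
        have h4 : 1 / (1 + 1 / (m':ℝ)) ^ K ≤ 1 / (1 + K * (1 / m')) :=
          one_div_le_one_div_of_le (by positivity) h1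
        have h5 : 1 / (1 + (K:ℝ) * (1 / m')) = (m':ℝ) / (m' + K) := by
          rw [div_eq_div_iff (by positivity) (by positivity)]
          field_simp
        linarith
      have hKnn : (0:ℝ) ≤ (1 - 1 / (m':ℝ)) ^ K := pow_nonneg (by linarith) K
      have e1 : r ^ (m - 1) ≤ ((m':ℝ) / (m' + K)) ^ 3 := by
        calc r ^ (m - 1) ≤ r ^ (6 * K) := hstep1
          _ = ((1 - 1 / (m':ℝ)) ^ K) ^ 3 := hstep2
          _ ≤ ((m':ℝ) / (m' + K)) ^ 3 := pow_le_pow_left₀ hKnn hbern 3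
      have hchain : 1 / (m':ℝ) * m * r ^ (m - 1) ≤ (m:ℝ) * m' ^ 2 / (m' + K) ^ 3 := by
        calc 1 / (m':ℝ) * m * r ^ (m - 1) ≤ 1 / (m':ℝ) * m * ((m':ℝ) / (m' + K)) ^ 3 :=
              mul_le_mul_of_nonneg_left e1 (by positivity)
          _ = (m:ℝ) * m' ^ 2 / (m' + K) ^ 3 := by
              field_simp
      have hnat : m * m' ^ 2 * 2 ^ (n + n') < (m' + K) ^ 3 := by
        have hexpeq : m * m' ^ 2 * 2 ^ (n + n') = 2 ^ (2 * n ^ 2 + 2 * n' ^ 2 * 2 + (n + n')) := by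
          rw [hm, hm', ← pow_mul, ← pow_add, ← pow_add]
        by_cases h4 : 4 ≤ n + n'
        · have hKcube : (2 : ℕ) ^ ((2 * n ^ 2 - 3) * 3) ≤ (m' + K) ^ 3 := by
            rw [pow_mul]
            exact Nat.pow_le_pow_left (by omega) 3
          have hle : 2 * n ^ 2 + 2 * n' ^ 2 * 2 + (n + n') < (2 * n ^ 2 - 3) * 3 := by
            obtain ⟨c, hc⟩ : ∃ c, 2 * n ^ 2 = c + 3 := ⟨2 * n ^ 2 - 3, (Nat.sub_add_cancel h3le).symm⟩
            obtain ⟨d, rfl⟩ : ∃ d, n = n' + 1 + d := ⟨n - n' - 1, by omega⟩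
            rw [hc, Nat.add_sub_cancel]
            nlinarith
          calc m * m' ^ 2 * 2 ^ (n + n') = 2 ^ (2 * n ^ 2 + 2 * n' ^ 2 * 2 + (n + n')) := hexpeq
            _ < 2 ^ ((2 * n ^ 2 - 3) * 3) := Nat.pow_lt_pow_right one_lt_two hle
            _ ≤ (m' + K) ^ 3 := hKcube
        · obtain ⟨rfl, rfl⟩ : n = 2 ∧ n' = 1 := by omega
          norm_num [hm, hm', hK]
      have hfin : (m:ℝ) * m' ^ 2 / (m' + K) ^ 3 < 1 / 2 ^ (n + n') := by
        rw [div_lt_div_iff₀ (by positivity) (by positivity)]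
        calc (m:ℝ) * m' ^ 2 * 2 ^ (n + n') = ((m * m' ^ 2 * 2 ^ (n + n') : ℕ) : ℝ) := by
              push_cast; ring
          _ < (((m' + K) ^ 3 : ℕ) : ℝ) := by exact_mod_cast hnat
          _ = 1 * ((m':ℝ) + K) ^ 3 := by push_cast; ring
      linarith
end

section
/- There exists a family {N_α : α ∈ [0,1]} of subsets of ℕ such that for every finite collection of distinct indices α_0, α_1, ..., α_M ∈ [0,1], the set N_{α_0} \ (N_{α_1} ∪ ... ∪ N_{α_M}) is infinite. -/
theorem exists_independent_family :
    ∃ N : Set.Icc (0 : ℝ) 1 → Set ℕ,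
      ∀ (A : Finset (Set.Icc (0 : ℝ) 1)) (α₀ : Set.Icc (0 : ℝ) 1),
        α₀ ∉ A → (N α₀ \ ⋃ α ∈ A, N α).Infinite := by
  have hlt : ∀ (α : ℝ) (n : ℕ), α - 1/(n+1) < α - 1/(n+2) := by
    intro α n
    have h : (1:ℝ)/(n+2) < 1/(n+1) := by
      apply one_div_lt_one_div_of_lt
      · positivity
      · linarith
    linarith
  choose qf h1 h2 using fun (α : ℝ) (n : ℕ) => exists_rat_btwn (hlt α n)
  -- qf α is strictly monotone hence injective
  have hmono : ∀ α : ℝ, StrictMono (qf α) := by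
    intro α n m hnm
    have key : (qf α n : ℝ) < qf α m := by
      have h3 : (1:ℝ)/(m+1) ≤ 1/(n+2) := by
        apply one_div_le_one_div_of_le
        · positivity
        · have : (n:ℝ) + 1 ≤ (m:ℝ) := by exact_mod_cast hnm
          linarith
      calc (qf α n : ℝ) < α - 1/(n+2) := h2 α n
        _ ≤ α - 1/(m+1) := by linarith
        _ < qf α m := h1 α m
    exact_mod_cast key
  have hinj : ∀ α : ℝ, Function.Injective (qf α) := fun α => (hmono α).injective
  -- cross intersections are finite
  have hcross : ∀ α β : ℝ, α < β →
      (Set.range (qf α) ∩ Set.range (qf β)).Finite := by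
    intro α β hab
    obtain ⟨K, hK⟩ := exists_nat_gt (1/(β - α))
    have hsub : Set.range (qf α) ∩ Set.range (qf β) ⊆
        (fun n => qf β n) '' (Set.Iio (K+1)) := by
      rintro x ⟨⟨m, hm⟩, ⟨n, hn⟩⟩
      refine ⟨n, ?_, hn⟩
      by_contra hcon
      simp only [Set.mem_Iio, not_lt] at hcon
      have hx1 : β - 1/(n+1) < (x : ℝ) := by
        have := h1 β n; rw [hn] at this; exact this
      have hx2 : (x : ℝ) < α := by
        have := h2 α m; rw [hm] at this
        have hpos : (0:ℝ) < 1/(m+2) := by positivity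
        linarith
      have hba : (0:ℝ) < β - α := by linarith
      have h5 : 1/(β-α) < (n:ℝ)+1 := by
        have : (K:ℝ) ≤ n := by exact_mod_cast Nat.le_of_succ_le hcon
        linarith [hK]
      have h6 : (1:ℝ)/(n+1) < β - α := by
        rw [div_lt_iff₀ (by positivity : (0:ℝ) < (n:ℝ)+1)]
        rw [div_lt_iff₀ hba] at h5
        linarith
      linarith
    exact Set.Finite.subset ((Set.finite_Iio _).image _) hsub
  -- the family
  refine ⟨fun α => Encodable.encode '' Set.range (qf (α : ℝ)), ?_⟩
  intro A α₀ hα₀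
  have henc : Function.Injective (Encodable.encode : ℚ → ℕ) := Encodable.encode_injective
  have hNinf : (Encodable.encode '' Set.range (qf (α₀ : ℝ))).Infinite :=
    (Set.infinite_range_of_injective (hinj _)).image (henc.injOn)
  have hfin : (⋃ α ∈ A, (Encodable.encode '' Set.range (qf (α₀ : ℝ))) ∩
      (Encodable.encode '' Set.range (qf (α : ℝ)))).Finite := by
    apply Set.Finite.biUnion A.finite_toSet
    intro α hα
    rw [← Set.image_inter henc]
    apply Set.Finite.image
    have hne : (α₀ : ℝ) ≠ (α : ℝ) := by
      intro h
      exact hα₀ (Subtype.ext h ▸ hα)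
    rcases lt_or_gt_of_ne hne with h | h
    · exact hcross _ _ h
    · rw [Set.inter_comm]; exact hcross _ _ h
  apply Set.Infinite.mono ?_ (hNinf.diff hfin)
  intro x hx
  obtain ⟨hx1, hx2⟩ := hx
  refine ⟨hx1, ?_⟩
  intro hmem
  simp only [Set.mem_iUnion] at hmem hx2
  obtain ⟨α, hα, hmα⟩ := hmem
  exact hx2 ⟨α, hα, hx1, hmα⟩
end

section
/- If real random variables X and Y are independent and each has density t ↦ (1/√(2πt))·e^(-t/2) on (0,∞) (i.e., each is the square of a standard Gaussian), then X + Y has density t ↦ (1/2)·e^(-t/2) on (0,∞). -/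
open MeasureTheory Real

section Aux

lemma invsqrt_half {z : ℝ} (hz : 0 < z) :
    IntervalIntegrable (fun y => (Real.sqrt (y * (z - y)))⁻¹) volume 0 (z / 2) := by
  have hmeas : Measurable fun y : ℝ => (Real.sqrt (y * (z - y)))⁻¹ :=
    ((continuous_id.mul (continuous_const.sub continuous_id)).sqrt.measurable).inv
  have hb : IntervalIntegrable (fun y : ℝ => (Real.sqrt (z / 2))⁻¹ * y ^ (-(1/2) : ℝ))
      volume 0 (z / 2) := (intervalIntegral.intervalIntegrable_rpow' (by norm_num)).const_mul _
  refine hb.mono_fun' hmeas.aestronglyMeasurable ?_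
  filter_upwards [ae_restrict_mem measurableSet_uIoc] with y hy
  rw [Set.uIoc_of_le (by linarith : (0:ℝ) ≤ z/2)] at hy
  obtain ⟨hy0, hy2⟩ := hy
  have h1 : y ^ (-(1/2) : ℝ) = (Real.sqrt y)⁻¹ := by
    rw [Real.rpow_neg hy0.le, Real.sqrt_eq_rpow]
  rw [Real.norm_eq_abs, abs_of_nonneg (by positivity), h1, ← mul_inv,
    ← Real.sqrt_mul (by positivity)]
  have hpos : 0 < Real.sqrt (z / 2 * y) := Real.sqrt_pos.mpr (by positivity)
  refine inv_anti₀ hpos (Real.sqrt_le_sqrt ?_)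
  rw [mul_comm]
  nlinarith

lemma invsqrt_intble {z : ℝ} (hz : 0 < z) :
    IntervalIntegrable (fun y => (Real.sqrt (y * (z - y)))⁻¹) volume 0 z := by
  have h1 := invsqrt_half hz
  have h2 := (invsqrt_half hz).comp_sub_left z
  simp only [sub_sub_cancel, sub_zero] at h2
  have heq : (fun x : ℝ => (Real.sqrt ((z - x) * x))⁻¹)
      = fun y => (Real.sqrt (y * (z - y)))⁻¹ := by
    funext x; rw [mul_comm]
  rw [heq, show z - z/2 = z/2 by ring] at h2
  exact h1.trans h2.symm

lemma integral_invsqrt {z : ℝ} (hz : 0 < z) :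
    ∫ y in (0:ℝ)..z, (Real.sqrt (y * (z - y)))⁻¹ = π := by
  have hderiv : ∀ y ∈ Set.Ioo (0:ℝ) z,
      HasDerivAt (fun y => 2 * Real.arcsin (Real.sqrt (y / z)))
        ((Real.sqrt (y * (z - y)))⁻¹) y := by
    intro y hy
    obtain ⟨hy0, hyz⟩ := hy
    have hzy : (0:ℝ) < z - y := by linarith
    have hyzpos : 0 < y / z := by positivity
    have hd1 : HasDerivAt (fun y : ℝ => y / z) (1 / z) y := by
      simpa using (hasDerivAt_id y).div_const z
    have hd2 := hd1.sqrt hyzpos.ne'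
    have hlt1 : Real.sqrt (y / z) < 1 := by
      rw [show (1:ℝ) = Real.sqrt 1 by simp]
      exact Real.sqrt_lt_sqrt hyzpos.le (by rw [div_lt_one hz]; linarith)
    have hgt : -1 < Real.sqrt (y / z) := lt_of_lt_of_le (by norm_num) (Real.sqrt_nonneg _)
    have hd3 := (Real.hasDerivAt_arcsin hgt.ne' hlt1.ne).comp y hd2
    have hd4 := hd3.const_mul 2
    convert hd4 using 1
    case e'_4 => rfl
    case e'_5 => rfl
    case e'_8 => rfl
    have hsq : Real.sqrt (y / z) ^ 2 = y / z := Real.sq_sqrt hyzpos.le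
    have h1z : 1 - y / z = (z - y) / z := by field_simp
    rw [hsq, h1z]
    have ha : 0 < Real.sqrt (y / z) := Real.sqrt_pos.mpr hyzpos
    have hb : 0 < Real.sqrt ((z - y) / z) := Real.sqrt_pos.mpr (by positivity)
    have hprod : Real.sqrt ((z - y)/z) * Real.sqrt (y/z) = Real.sqrt (y * (z - y)) / z := by
      rw [← Real.sqrt_mul (by positivity), show (z - y)/z * (y/z) = y * (z - y) / z^2 by ring,
        Real.sqrt_div (by positivity), Real.sqrt_sq hz.le]
    have hkey : 2 * (1 / Real.sqrt ((z - y)/z) * (1 / z / (2 * Real.sqrt (y / z))))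
        = (Real.sqrt ((z - y)/z) * Real.sqrt (y/z) * z)⁻¹ := by
      field_simp
    rw [hkey, hprod, div_mul_cancel₀ _ hz.ne']
  have hcont : ContinuousOn (fun y => 2 * Real.arcsin (Real.sqrt (y / z)))
      (Set.uIcc 0 z) :=
    (continuous_const.mul
      (Real.continuous_arcsin.comp ((continuous_id.div_const z).sqrt))).continuousOn
  have := intervalIntegral.integral_eq_sub_of_hasDerivAt_of_le hz.le
    (by rwa [Set.uIcc_of_le hz.le] at hcont) hderiv (invsqrt_intble hz)
  rw [this]
  simp [div_self hz.ne', Real.sqrt_one, Real.arcsin_one]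
  ring

noncomputable def hpdf (t : ℝ) : ℝ := 1 / Real.sqrt (2 * π * t) * Real.exp (-t / 2)

lemma hpdf_meas : Measurable hpdf :=
  ((measurable_const.div
    ((continuous_const.mul continuous_id).sqrt.measurable)).mul
    ((by fun_prop : Continuous fun t : ℝ => Real.exp (-t / 2)).measurable))

lemma hpdf_nonneg (t : ℝ) : 0 ≤ hpdf t := by
  unfold hpdf
  have := Real.sqrt_nonneg (2 * π * t)
  positivity

lemma hpdf_conv_eq {z : ℝ} (hz : 0 < z) {y : ℝ} (hy : y ∈ Set.Ioo 0 z) :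
    hpdf y * hpdf (z - y)
      = (Real.exp (-z / 2) / (2 * π)) * (Real.sqrt (y * (z - y)))⁻¹ := by
  obtain ⟨hy0, hyz⟩ := hy
  have hzy : (0:ℝ) < z - y := by linarith
  have hpi : (0:ℝ) < π := Real.pi_pos
  have hs : Real.sqrt (2 * π * y) * Real.sqrt (2 * π * (z - y))
      = 2 * π * Real.sqrt (y * (z - y)) := by
    rw [← Real.sqrt_mul (by positivity),
      show 2 * π * y * (2 * π * (z - y)) = (2 * π)^2 * (y * (z - y)) by ring,
      Real.sqrt_mul (by positivity), Real.sqrt_sq (by positivity)]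
  have he : Real.exp (-y / 2) * Real.exp (-(z - y) / 2) = Real.exp (-z / 2) := by
    rw [← Real.exp_add]; congr 1; ring
  unfold hpdf
  rw [show 1 / Real.sqrt (2*π*y) * Real.exp (-y/2)
        * (1 / Real.sqrt (2*π*(z-y)) * Real.exp (-(z-y)/2))
      = (Real.exp (-y/2) * Real.exp (-(z-y)/2))
        / (Real.sqrt (2*π*y) * Real.sqrt (2*π*(z-y))) by ring,
    hs, he]
  have hspos : 0 < Real.sqrt (y * (z - y)) := Real.sqrt_pos.mpr (by positivity)
  field_simp

lemma hpdf_conv_integrable {z : ℝ} (hz : 0 < z) :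
    IntegrableOn (fun y => hpdf y * hpdf (z - y)) (Set.Ioo 0 z) := by
  have h1 : IntegrableOn (fun y => (Real.exp (-z / 2) / (2 * π)) * (Real.sqrt (y * (z - y)))⁻¹)
      (Set.Ioo 0 z) := by
    have := ((invsqrt_intble hz).1).mono_set Set.Ioo_subset_Ioc_self
    exact this.const_mul _
  exact h1.congr_fun (fun y hy => (hpdf_conv_eq hz hy).symm) measurableSet_Ioo

lemma hpdf_conv_integral {z : ℝ} (hz : 0 < z) :
    ∫ y in Set.Ioo 0 z, hpdf y * hpdf (z - y) = 1 / 2 * Real.exp (-z / 2) := by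
  rw [setIntegral_congr_fun measurableSet_Ioo (fun y hy => hpdf_conv_eq hz hy),
    integral_const_mul, ← integral_Ioc_eq_integral_Ioo,
    ← intervalIntegral.integral_of_le hz.le, integral_invsqrt hz]
  have hpi : (0:ℝ) < π := Real.pi_pos
  field_simp

noncomputable def fd : ℝ → ENNReal :=
  Set.indicator (Set.Ioi (0:ℝ)) (fun t => ENNReal.ofReal (hpdf t))

lemma G_eq : (fun z => ∫⁻ x, fd x * fd (z - x))
    = Set.indicator (Set.Ioi (0:ℝ))
        (fun t => ENNReal.ofReal ((1 / 2) * Real.exp (-t / 2))) := by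
  funext z
  rcases le_or_gt z 0 with hz | hz
  · have h0 : ∀ x, fd x * fd (z - x) = 0 := by
      intro x
      unfold fd
      rcases le_or_gt x 0 with hx | hx
      · rw [Set.indicator_of_notMem (by simpa using hx), zero_mul]
      · have hmem : z - x ∉ Set.Ioi (0:ℝ) := by
          simp only [Set.mem_Ioi, not_lt]; linarith
        rw [Set.indicator_of_notMem hmem, mul_zero]
    simp only [h0, lintegral_zero]
    rw [Set.indicator_of_notMem (by simpa using hz)]
  · have h1 : (fun x => fd x * fd (z - x))
        = (Set.Ioo 0 z).indicator (fun x => ENNReal.ofReal (hpdf x * hpdf (z - x))) := by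
      funext x
      by_cases hx : x ∈ Set.Ioo 0 z
      · rw [Set.indicator_of_mem hx]
        unfold fd
        rw [Set.indicator_of_mem (by simpa using hx.1),
          Set.indicator_of_mem (by simp only [Set.mem_Ioi]; linarith [hx.2]),
          ← ENNReal.ofReal_mul (hpdf_nonneg x)]
      · rw [Set.indicator_of_notMem hx]
        unfold fd
        rcases le_or_gt x 0 with h | h
        · rw [Set.indicator_of_notMem (by simpa using h), zero_mul]
        · have hzx : z ≤ x := by
            by_contra hc; push_neg at hc; exact hx ⟨h, hc⟩
          have hmem : z - x ∉ Set.Ioi (0:ℝ) := by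
            simp only [Set.mem_Ioi, not_lt]; linarith
          rw [Set.indicator_of_notMem hmem, mul_zero]
    rw [h1]
    erw [lintegral_indicator measurableSet_Ioo _]
    rw [← ofReal_integral_eq_lintegral_ofReal (hpdf_conv_integrable hz)
        (Filter.Eventually.of_forall fun y => mul_nonneg (hpdf_nonneg _) (hpdf_nonneg _)),
      hpdf_conv_integral hz, Set.indicator_of_mem (by simpa using hz)]

lemma conv_withDensity (f g : ℝ → ENNReal) (hf : Measurable f) (hg : Measurable g) :
    (volume.withDensity f).conv (volume.withDensity g)
      = volume.withDensity (fun z => ∫⁻ x, f x * g (z - x)) := by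
  ext s hs
  rw [show (volume.withDensity f).conv (volume.withDensity g)
      = Measure.map (fun p : ℝ × ℝ => p.1 + p.2)
        ((volume.withDensity f).prod (volume.withDensity g)) from rfl,
    Measure.map_apply measurable_add hs, Measure.prod_apply (measurable_add hs)]
  have step1 : ∀ x : ℝ, (volume.withDensity g) (Prod.mk x ⁻¹' ((fun p : ℝ × ℝ => p.1 + p.2) ⁻¹' s))
      = ∫⁻ t, s.indicator (fun t => g (t - x)) t := by
    intro x
    have hA : Prod.mk x ⁻¹' ((fun p : ℝ × ℝ => p.1 + p.2) ⁻¹' s) = (fun y => x + y) ⁻¹' s := rfl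
    rw [hA, withDensity_apply _ (hs.preimage (measurable_const_add x)),
      ← lintegral_indicator (hs.preimage (measurable_const_add x)) _]
    have heq : ∀ y : ℝ, ((fun y => x + y) ⁻¹' s).indicator g y
        = s.indicator (fun t => g (t - x)) (x + y) := by
      intro y
      by_cases hy : x + y ∈ s
      · rw [Set.indicator_of_mem hy, Set.indicator_of_mem (by exact hy), add_sub_cancel_left]
      · rw [Set.indicator_of_notMem hy, Set.indicator_of_notMem (by exact hy)]
    simp_rw [heq]
    exact lintegral_add_left_eq_self (fun t => s.indicator (fun t => g (t - x)) t) x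
  simp_rw [step1]
  rw [lintegral_withDensity_eq_lintegral_mul _ hf (by
    apply Measurable.lintegral_prod_right
      (f := fun (x : ℝ) (t : ℝ) => s.indicator (fun t => g (t - x)) t)
    exact Measurable.indicator (hg.comp (measurable_snd.sub measurable_fst))
      (hs.preimage measurable_snd))]
  simp only [Pi.mul_apply]
  have hpull : ∀ x : ℝ, f x * ∫⁻ t, s.indicator (fun t => g (t - x)) t
      = ∫⁻ t, s.indicator (fun t => f x * g (t - x)) t := by
    intro x
    have hmeas' : Measurable (s.indicator (fun t => g (t - x))) :=
      Measurable.indicator (hg.comp (measurable_sub_const x)) hs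
    calc f x * ∫⁻ t, s.indicator (fun t => g (t - x)) t
        = ∫⁻ t, f x * s.indicator (fun t => g (t - x)) t := (lintegral_const_mul _ hmeas').symm
      _ = ∫⁻ t, s.indicator (fun t => f x * g (t - x)) t := by
          congr 1; funext t
          by_cases ht : t ∈ s
          · rw [Set.indicator_of_mem ht, Set.indicator_of_mem ht]
          · rw [Set.indicator_of_notMem ht, Set.indicator_of_notMem ht, mul_zero]
  simp_rw [hpull]
  rw [lintegral_lintegral_swap]
  · have hin : ∀ t : ℝ, (∫⁻ x, s.indicator (fun t => f x * g (t - x)) t)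
        = s.indicator (fun t => ∫⁻ x, f x * g (t - x)) t := by
      intro t
      by_cases ht : t ∈ s
      · simp only [Set.indicator_of_mem ht]
      · simp only [Set.indicator_of_notMem ht, lintegral_zero]
    simp_rw [hin]
    rw [withDensity_apply _ hs, ← lintegral_indicator hs]
  · apply Measurable.aemeasurable
    apply Measurable.indicator
    · exact (hf.comp measurable_fst).mul (hg.comp (measurable_snd.sub measurable_fst))
    · exact hs.preimage measurable_snd

end Aux

theorem sum_of_chi_squares_density {Ω : Type*} [MeasurableSpace Ω]
    (μ : Measure Ω) [IsProbabilityMeasure μ] (X Y : Ω → ℝ)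
    (hX : Measurable X) (hY : Measurable Y)
    (hindep : ProbabilityTheory.IndepFun X Y μ)
    (hXd : Measure.map X μ = volume.withDensity
      (Set.indicator (Set.Ioi (0 : ℝ))
        (fun t => ENNReal.ofReal (1 / Real.sqrt (2 * π * t) * Real.exp (-t / 2)))))
    (hYd : Measure.map Y μ = volume.withDensity
      (Set.indicator (Set.Ioi (0 : ℝ))
        (fun t => ENNReal.ofReal (1 / Real.sqrt (2 * π * t) * Real.exp (-t / 2))))) :
    Measure.map (X + Y) μ = volume.withDensity
      (Set.indicator (Set.Ioi (0 : ℝ))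
        (fun t => ENNReal.ofReal ((1 / 2) * Real.exp (-t / 2)))) := by
  have hXd' : Measure.map X μ = volume.withDensity fd := hXd
  have hYd' : Measure.map Y μ = volume.withDensity fd := hYd
  have hfd : Measurable fd :=
    (ENNReal.measurable_ofReal.comp hpdf_meas).indicator measurableSet_Ioi
  have hpair : μ.map (fun ω => (X ω, Y ω)) = (μ.map X).prod (μ.map Y) :=
    (ProbabilityTheory.indepFun_iff_map_prod_eq_prod_map_map
      hX.aemeasurable hY.aemeasurable).mp hindep
  have hconv : Measure.map (X + Y) μ = (μ.map X).conv (μ.map Y) := by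
    rw [show (μ.map X).conv (μ.map Y)
        = Measure.map (fun p : ℝ × ℝ => p.1 + p.2) ((μ.map X).prod (μ.map Y)) from rfl,
      ← hpair, Measure.map_map measurable_add (hX.prodMk hY)]
    rfl
  rw [hconv, hXd', hYd', conv_withDensity fd fd hfd hfd, G_eq]
end

section
/- Let f(z) = Σ_{n=0}^∞ a_n z^(s_n) be a power series where (s_n) is a strictly increasing sequence of natural numbers with s_{n+1}/s_n ≥ q for some q > 1, and suppose the coefficients (a_n) are bounded. Then f defines a holomorphic function on the unit disc satisfying sup_{|z|<1} (1-|z|^2)|f'(z)| < ∞, i.e., f belongs to the Bloch space. -/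
open Metric Finset

private lemma geo_sum_le {r : ℝ} (hr0 : 0 ≤ r) (hr1 : r < 1) (m : ℕ) :
    ∑ k ∈ range m, r ^ k ≤ (1 - r)⁻¹ := by
  calc ∑ k ∈ range m, r ^ k ≤ ∑' k : ℕ, r ^ k :=
        Summable.sum_le_tsum _ (fun i _ => pow_nonneg hr0 i) (summable_geometric_of_lt_one hr0 hr1)
    _ = (1 - r)⁻¹ := tsum_geometric_of_lt_one hr0 hr1

private lemma ico_sum_ge {r : ℝ} (hr0 : 0 ≤ r) (hr1 : r < 1) (a b : ℕ) (hab : a ≤ b) :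
    ((b : ℝ) - (a : ℝ)) * r ^ (b - 1) ≤ ∑ k ∈ Finset.Ico a b, r ^ k := by
  have h1 : ∀ k ∈ Finset.Ico a b, r ^ (b - 1) ≤ r ^ k := by
    intro k hk
    rw [Finset.mem_Ico] at hk
    exact pow_le_pow_of_le_one hr0 hr1.le (Nat.le_sub_one_of_lt hk.2)
  have h2 := Finset.card_nsmul_le_sum (Finset.Ico a b) (fun k => r ^ k) (r ^ (b - 1)) h1
  rw [Nat.card_Ico] at h2
  calc ((b : ℝ) - (a : ℝ)) * r ^ (b - 1) = ((b - a : ℕ) : ℝ) * r ^ (b - 1) := by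
        rw [Nat.cast_sub hab]
    _ = (b - a) • r ^ (b - 1) := (nsmul_eq_mul _ _).symm
    _ ≤ _ := h2

private lemma key_partial (s : ℕ → ℕ) (hmono : StrictMono s) (q : ℝ) (hq : 1 < q)
    (hgap : ∀ n, q * (s n : ℝ) ≤ (s (n + 1) : ℝ)) {r : ℝ} (hr0 : 0 ≤ r) (hr1 : r < 1) :
    ∀ N, ∑ n ∈ range N, (1 - q⁻¹) * ((s n : ℝ) * r ^ (s n - 1)) ≤ (1 - r)⁻¹ := by
  have hq0 : (0 : ℝ) < q := lt_trans one_pos hq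
  have hqi : (0 : ℝ) < 1 - q⁻¹ := by
    have : q⁻¹ < 1 := inv_lt_one_of_one_lt₀ hq
    linarith
  have claim : ∀ N, ∑ n ∈ range (N + 1), (1 - q⁻¹) * ((s n : ℝ) * r ^ (s n - 1)) ≤
      ∑ k ∈ range (s N), r ^ k := by
    intro N
    induction N with
    | zero =>
      simp only [Finset.sum_range_succ, Finset.sum_range_zero, zero_add]
      have h0 : ((s 0 : ℝ) - ((0 : ℕ) : ℝ)) * r ^ (s 0 - 1) ≤ ∑ k ∈ Finset.Ico 0 (s 0), r ^ k :=
        ico_sum_ge hr0 hr1 0 (s 0) (Nat.zero_le _)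
      rw [Nat.cast_zero, sub_zero] at h0
      have hnn : 0 ≤ (s 0 : ℝ) * r ^ (s 0 - 1) :=
        mul_nonneg (Nat.cast_nonneg _) (pow_nonneg hr0 _)
      have : (1 - q⁻¹) * ((s 0 : ℝ) * r ^ (s 0 - 1)) ≤ (s 0 : ℝ) * r ^ (s 0 - 1) := by
        nlinarith [inv_nonneg.mpr hq0.le]
      calc (1 - q⁻¹) * ((s 0 : ℝ) * r ^ (s 0 - 1)) ≤ (s 0 : ℝ) * r ^ (s 0 - 1) := this
        _ ≤ ∑ k ∈ range (s 0), r ^ k := by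
            rw [Finset.range_eq_Ico]; linarith [h0]
    | succ N ih =>
      rw [Finset.sum_range_succ]
      have hle : s N ≤ s (N + 1) := (hmono (Nat.lt_succ_self N)).le
      have hsplit : ∑ k ∈ range (s N), r ^ k + ∑ k ∈ Finset.Ico (s N) (s (N + 1)), r ^ k =
          ∑ k ∈ range (s (N + 1)), r ^ k := by
        rw [Finset.range_eq_Ico, Finset.range_eq_Ico]
        exact Finset.sum_Ico_consecutive (fun k => r ^ k) (Nat.zero_le _) hle
      have hcardbound : (1 - q⁻¹) * (s (N + 1) : ℝ) ≤ (s (N + 1) : ℝ) - (s N : ℝ) := by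
        have h := hgap N
        have : (s N : ℝ) ≤ q⁻¹ * (s (N + 1) : ℝ) := by
          have h2 := mul_le_mul_of_nonneg_left h (inv_nonneg.mpr hq0.le)
          rwa [← mul_assoc, inv_mul_cancel₀ hq0.ne', one_mul] at h2
        nlinarith
      have hterm : (1 - q⁻¹) * ((s (N + 1) : ℝ) * r ^ (s (N + 1) - 1)) ≤
          ∑ k ∈ Finset.Ico (s N) (s (N + 1)), r ^ k := by
        have h0 := ico_sum_ge hr0 hr1 (s N) (s (N + 1)) hle
        have hpow : 0 ≤ r ^ (s (N + 1) - 1) := pow_nonneg hr0 _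
        nlinarith
      linarith
  intro N
  cases N with
  | zero => simp [inv_nonneg.mpr (sub_nonneg.mpr hr1.le)]
  | succ N =>
    exact le_trans (claim N) (geo_sum_le hr0 hr1 _)

private lemma key_bound (s : ℕ → ℕ) (hmono : StrictMono s) (q : ℝ) (hq : 1 < q)
    (hgap : ∀ n, q * (s n : ℝ) ≤ (s (n + 1) : ℝ)) {r : ℝ} (hr0 : 0 ≤ r) (hr1 : r < 1) :
    ∀ N, ∑ n ∈ range N, (s n : ℝ) * r ^ (s n - 1) ≤ (1 - q⁻¹)⁻¹ * (1 - r)⁻¹ := by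
  have hqi : (0 : ℝ) < 1 - q⁻¹ := by
    have : q⁻¹ < 1 := inv_lt_one_of_one_lt₀ (by linarith)
    linarith
  intro N
  have h := key_partial s hmono q hq hgap hr0 hr1 N
  rw [← Finset.mul_sum] at h
  rw [← mul_le_mul_iff_right₀ hqi, ← mul_assoc, mul_inv_cancel₀ hqi.ne', one_mul]
  exact h

theorem lacunary_bounded_coeffs_in_Bloch (s : ℕ → ℕ) (hmono : StrictMono s) (q : ℝ) (hq : 1 < q)
    (hgap : ∀ n, q * (s n : ℝ) ≤ (s (n + 1) : ℝ))
    (a : ℕ → ℂ) (A : ℝ) (ha : ∀ n, ‖a n‖ ≤ A) :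
    DifferentiableOn ℂ (fun z : ℂ => ∑' n, a n * z ^ s n) (ball (0 : ℂ) 1) ∧
    ∃ C : ℝ, ∀ z ∈ ball (0 : ℂ) 1,
      (1 - ‖z‖ ^ 2) * ‖deriv (fun z : ℂ => ∑' n, a n * z ^ s n) z‖ ≤ C := by
  set A' : ℝ := max A 0 with hA'
  have hA'0 : 0 ≤ A' := le_max_right _ _
  have haA' : ∀ n, ‖a n‖ ≤ A' := fun n => le_trans (ha n) (le_max_left _ _)
  have hqi : (0 : ℝ) < 1 - q⁻¹ := by
    have : q⁻¹ < 1 := inv_lt_one_of_one_lt₀ (by linarith)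
    linarith
  -- summability of the majorant for any r < 1
  have hmaj : ∀ r : ℝ, 0 ≤ r → r < 1 →
      Summable (fun n => A' * ((s n : ℝ) * r ^ (s n - 1))) := by
    intro r hr0 hr1
    apply summable_of_sum_range_le
      (c := A' * ((1 - q⁻¹)⁻¹ * (1 - r)⁻¹))
    · intro n
      exact mul_nonneg hA'0 (mul_nonneg (Nat.cast_nonneg _) (pow_nonneg hr0 _))
    · intro n
      rw [← Finset.mul_sum]
      exact mul_le_mul_of_nonneg_left (key_bound s hmono q hq hgap hr0 hr1 n) hA'0
  -- the key derivative fact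
  have H : ∀ z ∈ ball (0 : ℂ) 1,
      HasDerivAt (fun z : ℂ => ∑' n, a n * z ^ s n)
        (∑' n, a n * ((s n : ℂ) * z ^ (s n - 1))) z := by
    intro z hz
    rw [mem_ball, dist_zero_right] at hz
    set r : ℝ := (1 + ‖z‖) / 2 with hr
    have hr0 : 0 ≤ r := by positivity
    have hr1 : r < 1 := by rw [hr]; linarith
    have hzr : ‖z‖ < r := by rw [hr]; linarith
    apply hasDerivAt_tsum_of_isPreconnected (hmaj r hr0 hr1) isOpen_ball
      (convex_ball (0 : ℂ) r).isPreconnected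
      (g := fun n y => a n * y ^ s n)
      (g' := fun n y => a n * ((s n : ℂ) * y ^ (s n - 1)))
      (fun n y _ => (hasDerivAt_pow (s n) y).const_mul (a n))
      ?_ (mem_ball_self (by linarith [norm_nonneg z])) ?_
      (by rwa [mem_ball, dist_zero_right])
    · intro n y hy
      rw [mem_ball, dist_zero_right] at hy
      rw [norm_mul, norm_mul, norm_pow, Complex.norm_natCast]
      apply mul_le_mul (haA' n)
      · exact mul_le_mul_of_nonneg_left
          (pow_le_pow_left₀ (norm_nonneg y) hy.le _) (Nat.cast_nonneg _)
      · positivity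
      · exact hA'0
    · apply summable_of_ne_finset_zero (s := ({0} : Finset ℕ))
      intro n hn
      have hn0 : 0 < s n := by
        have : s 0 < s n := hmono (Nat.pos_of_ne_zero (by simpa using hn))
        omega
      simp [zero_pow hn0.ne']
  constructor
  · exact fun z hz => (H z hz).differentiableAt.differentiableWithinAt
  · refine ⟨2 * A' * (1 - q⁻¹)⁻¹, fun z hz => ?_⟩
    rw [(H z hz).deriv]
    rw [mem_ball, dist_zero_right] at hz
    set r : ℝ := ‖z‖ with hrdef
    have hr0 : 0 ≤ r := norm_nonneg z
    have hnormeq : ∀ n, ‖a n * ((s n : ℂ) * z ^ (s n - 1))‖ =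
        ‖a n‖ * ((s n : ℝ) * r ^ (s n - 1)) := by
      intro n
      rw [norm_mul, norm_mul, norm_pow, Complex.norm_natCast]
    have hmajr := hmaj r hr0 hz
    have hsumnorm : Summable (fun n => ‖a n * ((s n : ℂ) * z ^ (s n - 1))‖) := by
      apply Summable.of_nonneg_of_le (fun n => norm_nonneg _) _ hmajr
      intro n
      rw [hnormeq n]
      exact mul_le_mul_of_nonneg_right (haA' n)
        (mul_nonneg (Nat.cast_nonneg _) (pow_nonneg hr0 _))
    have hTle : ‖∑' n, a n * ((s n : ℂ) * z ^ (s n - 1))‖ ≤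
        ∑' n, A' * ((s n : ℝ) * r ^ (s n - 1)) := by
      refine le_trans (norm_tsum_le_tsum_norm hsumnorm) (Summable.tsum_le_tsum ?_ hsumnorm hmajr)
      intro n
      rw [hnormeq n]
      exact mul_le_mul_of_nonneg_right (haA' n)
        (mul_nonneg (Nat.cast_nonneg _) (pow_nonneg hr0 _))
    have hT : ∑' n, A' * ((s n : ℝ) * r ^ (s n - 1)) ≤ A' * ((1 - q⁻¹)⁻¹ * (1 - r)⁻¹) := by
      apply Summable.tsum_le_of_sum_range_le hmajr
      intro n
      rw [← Finset.mul_sum]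
      exact mul_le_mul_of_nonneg_left (key_bound s hmono q hq hgap hr0 hz n) hA'0
    have hD := le_trans hTle hT
    have h1r : (0 : ℝ) < 1 - r := by linarith
    have hK : (0 : ℝ) < (1 - q⁻¹)⁻¹ := inv_pos.mpr hqi
    have hinv : (1 - r) * (1 - r)⁻¹ = 1 := mul_inv_cancel₀ h1r.ne'
    have hDnn : 0 ≤ ‖∑' n, a n * ((s n : ℂ) * z ^ (s n - 1))‖ := norm_nonneg _
    have hnn2 : (0:ℝ) ≤ 1 - r ^ 2 := by nlinarith
    have h2 := mul_le_mul_of_nonneg_left hD hnn2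
    have h3 : (1 - r ^ 2) * (A' * ((1 - q⁻¹)⁻¹ * (1 - r)⁻¹)) =
        (1 + r) * (A' * (1 - q⁻¹)⁻¹) * ((1 - r) * (1 - r)⁻¹) := by ring
    rw [hinv, mul_one] at h3
    have h4 : (1 + r) * (A' * (1 - q⁻¹)⁻¹) ≤ 2 * (A' * (1 - q⁻¹)⁻¹) :=
      mul_le_mul_of_nonneg_right (by linarith) (mul_nonneg hA'0 hK.le)
    linarith
end

section
/- Let H be the set of holomorphic functions f on the unit disc with f(0) = 0 and bounded Bloch seminorm, and suppose f ∈ H. Then the function g(z) = f(z)/z (extended by g(0) = f'(0)) is holomorphic on the disc and has finite Bloch norm; moreover there is a constant K independent of f with ‖g‖_𝓑 ≤ K·‖f‖_𝓑, where ‖h‖_𝓑 = |h(0)| + sup_{|z|<1}(1-|z|^2)|h'(z)|. -/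
open Metric

theorem division_property_Bloch :
    ∃ K : ℝ, 0 < K ∧ ∀ (f : ℂ → ℂ) (C : ℝ),
      DifferentiableOn ℂ f (ball (0 : ℂ) 1) → f 0 = 0 →
      (∀ z ∈ ball (0 : ℂ) 1, (1 - ‖z‖ ^ 2) * ‖deriv f z‖ ≤ C) →
      letI g : ℂ → ℂ := fun z => if z = 0 then deriv f 0 else f z / z
      DifferentiableOn ℂ g (ball (0 : ℂ) 1) ∧
        ∀ z ∈ ball (0 : ℂ) 1,
          ‖g 0‖ + (1 - ‖z‖ ^ 2) * ‖deriv g z‖ ≤ K * (‖f 0‖ + C) := by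
  refine ⟨14, by norm_num, fun f C hd hf0 hC => ?_⟩
  set g : ℂ → ℂ := fun z => if z = 0 then deriv f 0 else f z / z with hgdef
  have h01 : (0:ℂ) ∈ ball (0:ℂ) 1 := by simp
  have hC0 : ‖deriv f 0‖ ≤ C := by simpa using hC 0 h01
  have hCnn : 0 ≤ C := le_trans (norm_nonneg _) hC0
  have hg_eq : g = dslope f 0 := by
    funext z
    by_cases h : z = 0
    · simp [g, h, dslope_same]
    · simp [g, h, dslope_of_ne _ h, slope, hf0, div_eq_inv_mul]
  have hg0 : g 0 = deriv f 0 := by simp [g]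
  have hderiv : ∀ z ∈ ball (0:ℂ) 1, ‖deriv f z‖ ≤ C / (1 - ‖z‖ ^ 2) := by
    intro z hz
    rw [mem_ball_zero_iff] at hz
    have hpos : (0:ℝ) < 1 - ‖z‖ ^ 2 := by nlinarith [norm_nonneg z]
    rw [le_div_iff₀ hpos, mul_comm]
    exact hC z (by simpa [mem_ball_zero_iff] using hz)
  have hfz : ∀ z ∈ ball (0:ℂ) 1, (1 - ‖z‖ ^ 2) * ‖f z‖ ≤ C * ‖z‖ := by
    intro z hz
    rw [mem_ball_zero_iff] at hz
    have hpos : (0:ℝ) < 1 - ‖z‖ ^ 2 := by nlinarith [norm_nonneg z]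
    have hsub : closedBall (0:ℂ) ‖z‖ ⊆ ball (0:ℂ) 1 := closedBall_subset_ball hz
    have key : ‖f z - f 0‖ ≤ (C / (1 - ‖z‖ ^ 2)) * ‖z - 0‖ := by
      refine (convex_closedBall (0:ℂ) ‖z‖).norm_image_sub_le_of_norm_deriv_le
        (fun x hx => hd.differentiableAt (isOpen_ball.mem_nhds (hsub hx)))
        (fun x hx => ?_) (mem_closedBall_self (norm_nonneg z))
        (by simp [mem_closedBall_iff_norm])
      have hx1 : x ∈ ball (0:ℂ) 1 := hsub hx
      have hxz : ‖x‖ ≤ ‖z‖ := by simpa [mem_closedBall_iff_norm] using hx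
      have hposx : (0:ℝ) < 1 - ‖x‖ ^ 2 := by
        rw [mem_ball_zero_iff] at hx1; nlinarith [norm_nonneg x]
      refine (hderiv x hx1).trans (div_le_div_of_nonneg_left hCnn hpos ?_)
      nlinarith [norm_nonneg x]
    rw [hf0, sub_zero, sub_zero] at key
    calc (1 - ‖z‖ ^ 2) * ‖f z‖ ≤ (1 - ‖z‖ ^ 2) * ((C / (1 - ‖z‖ ^ 2)) * ‖z‖) :=
          mul_le_mul_of_nonneg_left key hpos.le
      _ = C * ‖z‖ * ((1 - ‖z‖ ^ 2) / (1 - ‖z‖ ^ 2)) := by ring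
      _ = C * ‖z‖ := by rw [div_self hpos.ne', mul_one]
  have hgw : ∀ w ∈ ball (0:ℂ) 1, ‖g w‖ ≤ C / (1 - ‖w‖ ^ 2) := by
    intro w hw
    have hw1 : ‖w‖ < 1 := mem_ball_zero_iff.mp hw
    have hpos : (0:ℝ) < 1 - ‖w‖ ^ 2 := by nlinarith [norm_nonneg w]
    by_cases h : w = 0
    · subst h
      rw [hg0]
      simpa using hC0
    · have hgwv : g w = f w / w := by simp [g, h]
      have hwn : (0:ℝ) < ‖w‖ := norm_pos_iff.mpr h
      rw [hgwv, norm_div, le_div_iff₀ hpos, div_mul_eq_mul_div, div_le_iff₀ hwn,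
        mul_comm ‖f w‖]
      exact hfz w hw
  have hdiffg : DifferentiableOn ℂ g (ball (0:ℂ) 1) := by
    rw [hg_eq]
    intro x hx
    by_cases h : x = 0
    · subst h
      obtain ⟨p, hp⟩ := hd.analyticAt (isOpen_ball.mem_nhds h01)
      exact (hp.has_fpower_series_dslope_fslope).analyticAt.differentiableAt.differentiableWithinAt
    · exact (differentiableWithinAt_dslope_of_ne h).mpr
        (hd.differentiableAt (isOpen_ball.mem_nhds hx)).differentiableWithinAt
  refine ⟨hdiffg, fun z hz => ?_⟩
  have hz1 : ‖z‖ < 1 := mem_ball_zero_iff.mp hz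
  have hg0C : ‖g 0‖ ≤ C := by rw [hg0]; exact hC0
  rw [hf0, norm_zero, zero_add]
  have main : (1 - ‖z‖ ^ 2) * ‖deriv g z‖ ≤ 13 * C := by
    by_cases hhalf : ‖z‖ ≤ 1/2
    · have hsub : closedBall z (1/4) ⊆ ball (0:ℂ) 1 := by
        intro w hw
        rw [mem_closedBall_iff_norm] at hw
        rw [mem_ball_zero_iff]
        calc ‖w‖ = ‖(w - z) + z‖ := by ring_nf
          _ ≤ ‖w - z‖ + ‖z‖ := norm_add_le _ _
          _ < 1 := by linarith
      have hdc : DiffContOnCl ℂ g (ball z (1/4)) :=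
        DifferentiableOn.diffContOnCl (by
          rw [closure_ball z (by norm_num)]
          exact hdiffg.mono hsub)
      have hbd : ∀ w ∈ sphere z (1/4), ‖g w‖ ≤ 3 * C := by
        intro w hw
        have hw' : w ∈ closedBall z (1/4) := sphere_subset_closedBall hw
        have hw1 : w ∈ ball (0:ℂ) 1 := hsub hw'
        have hwn : ‖w‖ ≤ 3/4 := by
          rw [mem_closedBall_iff_norm] at hw'
          calc ‖w‖ = ‖(w - z) + z‖ := by ring_nf
            _ ≤ ‖w - z‖ + ‖z‖ := norm_add_le _ _
            _ ≤ 3/4 := by linarith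
        have hsq : ‖w‖ ^ 2 ≤ 9/16 := by nlinarith [norm_nonneg w]
        refine (hgw w hw1).trans ?_
        rw [div_le_iff₀ (by nlinarith [norm_nonneg w])]
        nlinarith [hCnn, hsq]
      have h12 : ‖deriv g z‖ ≤ 12 * C := by
        calc ‖deriv g z‖ ≤ 3 * C / (1/4) :=
              Complex.norm_deriv_le_of_forall_mem_sphere_norm_le (by norm_num) hdc hbd
          _ = 12 * C := by ring
      have h1 : 1 - ‖z‖ ^ 2 ≤ 1 := by nlinarith [norm_nonneg z]
      calc (1 - ‖z‖ ^ 2) * ‖deriv g z‖ ≤ 1 * (12 * C) :=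
            mul_le_mul h1 h12 (norm_nonneg _) one_pos.le
        _ ≤ 13 * C := by linarith
    · push_neg at hhalf
      have hzn : (0:ℝ) < ‖z‖ := by linarith
      have hz0 : z ≠ 0 := by
        intro h; rw [h, norm_zero] at hzn; exact lt_irrefl 0 hzn
      have hderg : deriv g z = (deriv f z * z - f z) / z ^ 2 := by
        have hev : g =ᶠ[nhds z] fun w => f w / w := by
          filter_upwards [isOpen_ne.mem_nhds (hz0 : z ≠ (0:ℂ))] with w hw
          simp [g, hw]
        have hdd := deriv_fun_div (hd.differentiableAt (isOpen_ball.mem_nhds hz))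
          differentiableAt_fun_id hz0
        rw [hev.deriv_eq, hdd]
        simp
      rw [hderg]
      have hb : ‖(deriv f z * z - f z) / z ^ 2‖ ≤ (‖deriv f z‖ * ‖z‖ + ‖f z‖) / ‖z‖ ^ 2 := by
        rw [norm_div, norm_pow]
        exact div_le_div_of_nonneg_right ((norm_sub_le _ _).trans (by rw [norm_mul]))
          (by positivity)
      have hpos : (0:ℝ) < 1 - ‖z‖ ^ 2 := by nlinarith
      have h1 : (1 - ‖z‖ ^ 2) * ‖deriv f z‖ ≤ C := hC z hz
      have h2 : (1 - ‖z‖ ^ 2) * ‖f z‖ ≤ C * ‖z‖ := hfz z hz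
      calc (1 - ‖z‖ ^ 2) * ‖(deriv f z * z - f z) / z ^ 2‖
          ≤ (1 - ‖z‖ ^ 2) * ((‖deriv f z‖ * ‖z‖ + ‖f z‖) / ‖z‖ ^ 2) :=
            mul_le_mul_of_nonneg_left hb hpos.le
        _ = ((1 - ‖z‖ ^ 2) * ‖deriv f z‖ * ‖z‖ + (1 - ‖z‖ ^ 2) * ‖f z‖) / ‖z‖ ^ 2 := by ring
        _ ≤ (C * ‖z‖ + C * ‖z‖) / ‖z‖ ^ 2 := by
            apply div_le_div_of_nonneg_right _ (by positivity)
            have := mul_le_mul_of_nonneg_right h1 (norm_nonneg z)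
            linarith
        _ ≤ 4 * C := by
            rw [div_le_iff₀ (by positivity)]
            nlinarith [mul_nonneg (mul_nonneg hCnn hzn.le)
              (by linarith : (0:ℝ) ≤ 2 * ‖z‖ - 1), mul_nonneg hCnn (sq_nonneg ‖z‖)]
        _ ≤ 13 * C := by linarith
  linarith
end
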